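/- Let σx, σy, σz be the standard 2×2 Pauli matrices and, for c = (c₁,c₂,c₃) ∈ ℝ³, let ρ(c) := (1/4)·(I₄ + c₁·σx⊗σx + c₂·σy⊗σy + c₃·σz⊗σz). Then ρ(c) is positive semidefinite if and only if c lies in the tetrahedron T ⊂ ℝ³ with vertices (−1,−1,−1), (−1,1,1), (1,−1,1), (1,1,−1); equivalently, if and only if the four inequalities 1 − c₁ − c₂ − c₃ ≥ 0, 1 − c₁ + c₂ + c₃ ≥ 0, 1 + c₁ − c₂ + c₃ ≥ 0, 1 + c₁ + c₂ − c₃ ≥ 0 hold. -/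

import Mathlib

open Matrix Kronecker
open scoped ComplexOrder

/-- The Pauli matrix `σx`. -/
def σx : Matrix (Fin 2) (Fin 2) ℂ := !![0, 1; 1, 0]

/-- The Pauli matrix `σy`. -/
def σy : Matrix (Fin 2) (Fin 2) ℂ := !![0, -Complex.I; Complex.I, 0]

/-- The Pauli matrix `σz`. -/
def σz : Matrix (Fin 2) (Fin 2) ℂ := !![1, 0; 0, -1]

/-- The maximally mixed marginal two-qubit state with correlation vector `c`:
`ρ(c) = (1/4)(I₄ + c₁ σx⊗σx + c₂ σy⊗σy + c₃ σz⊗σz)` (Kronecker product). -/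
noncomputable def ρ (c : Fin 3 → ℝ) : Matrix (Fin 2 × Fin 2) (Fin 2 × Fin 2) ℂ :=
  (1 / 4 : ℂ) • (1 + (c 0 : ℂ) • (σx ⊗ₖ σx) + (c 1 : ℂ) • (σy ⊗ₖ σy) + (c 2 : ℂ) • (σz ⊗ₖ σz))

lemma psd_vmv {n : Type*} [Fintype n] [DecidableEq n] (v : n → ℂ) :
    (vecMulVec v (star v)).PosSemidef := by
  have : vecMulVec v (star v) = replicateCol Unit v * (replicateCol Unit v)ᴴ := by
    rw [conjTranspose_replicateCol, vecMulVec_eq Unit]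
  rw [this]
  exact posSemidef_self_mul_conjTranspose _

lemma psd_rsmul {n : Type*} [Fintype n] (r : ℝ) (hr : 0 ≤ r)
    {M : Matrix n n ℂ} (hM : M.PosSemidef) : ((r : ℂ) • M).PosSemidef := by
  refine posSemidef_iff_dotProduct_mulVec.mpr ⟨?_, ?_⟩
  · unfold Matrix.IsHermitian
    rw [conjTranspose_smul, hM.1.eq]
    congr 1
    simp
  · intro x
    rw [smul_mulVec, dotProduct_smul]
    exact mul_nonneg (by exact_mod_cast hr) (hM.dotProduct_mulVec_nonneg x)

/-- Unnormalized Bell vector `|01⟩ - |10⟩`. -/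
def bv1 : Fin 2 × Fin 2 → ℂ := fun p => !![0,1;-1,0] p.1 p.2
/-- Unnormalized Bell vector `|00⟩ - |11⟩`. -/
def bv2 : Fin 2 × Fin 2 → ℂ := fun p => !![1,0;0,-1] p.1 p.2
/-- Unnormalized Bell vector `|00⟩ + |11⟩`. -/
def bv3 : Fin 2 × Fin 2 → ℂ := fun p => !![1,0;0,1] p.1 p.2
/-- Unnormalized Bell vector `|01⟩ + |10⟩`. -/
def bv4 : Fin 2 × Fin 2 → ℂ := fun p => !![0,1;1,0] p.1 p.2

lemma rho_decomp (c : Fin 3 → ℝ) :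
    ρ c = (((1 - c 0 - c 1 - c 2)/8 : ℝ) : ℂ) • vecMulVec bv1 (star bv1)
        + (((1 - c 0 + c 1 + c 2)/8 : ℝ) : ℂ) • vecMulVec bv2 (star bv2)
        + (((1 + c 0 - c 1 + c 2)/8 : ℝ) : ℂ) • vecMulVec bv3 (star bv3)
        + (((1 + c 0 + c 1 - c 2)/8 : ℝ) : ℂ) • vecMulVec bv4 (star bv4) := by
  ext ⟨i,j⟩ ⟨k,l⟩
  fin_cases i <;> fin_cases j <;> fin_cases k <;> fin_cases l <;>
    simp [ρ, σx, σy, σz, bv1, bv2, bv3, bv4, vecMulVec, Matrix.one_apply,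
      Matrix.kroneckerMap_apply, Prod.ext_iff] <;> ring

set_option maxHeartbeats 1000000 in
lemma psd_iff_ineq (c : Fin 3 → ℝ) :
    (ρ c).PosSemidef ↔
      (1 - c 0 - c 1 - c 2 ≥ 0 ∧ 1 - c 0 + c 1 + c 2 ≥ 0 ∧
       1 + c 0 - c 1 + c 2 ≥ 0 ∧ 1 + c 0 + c 1 - c 2 ≥ 0) := by
  constructor
  · intro h
    refine ⟨?_, ?_, ?_, ?_⟩
    · have := h.dotProduct_mulVec_nonneg bv1
      rw [rho_decomp] at this
      simp [dotProduct, mulVec, vecMulVec, bv1, bv2, bv3, bv4,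
        Fintype.sum_prod_type, Fin.sum_univ_two] at this
      norm_cast at this
      have := (Complex.le_def.mp this).1
      simp at this
      linarith
    · have := h.dotProduct_mulVec_nonneg bv2
      rw [rho_decomp] at this
      simp [dotProduct, mulVec, vecMulVec, bv1, bv2, bv3, bv4,
        Fintype.sum_prod_type, Fin.sum_univ_two] at this
      norm_cast at this
      have := (Complex.le_def.mp this).1
      simp at this
      linarith
    · have := h.dotProduct_mulVec_nonneg bv3
      rw [rho_decomp] at this
      simp [dotProduct, mulVec, vecMulVec, bv1, bv2, bv3, bv4,
        Fintype.sum_prod_type, Fin.sum_univ_two] at this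
      norm_cast at this
      have := (Complex.le_def.mp this).1
      simp at this
      linarith
    · have := h.dotProduct_mulVec_nonneg bv4
      rw [rho_decomp] at this
      simp [dotProduct, mulVec, vecMulVec, bv1, bv2, bv3, bv4,
        Fintype.sum_prod_type, Fin.sum_univ_two] at this
      norm_cast at this
      have := (Complex.le_def.mp this).1
      simp at this
      linarith
  · rintro ⟨h1, h2, h3, h4⟩
    rw [rho_decomp]
    exact (((psd_rsmul _ (by linarith) (psd_vmv bv1)).add
      (psd_rsmul _ (by linarith) (psd_vmv bv2))).add
      (psd_rsmul _ (by linarith) (psd_vmv bv3))).add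
      (psd_rsmul _ (by linarith) (psd_vmv bv4))

lemma ineq_iff_hull (c : Fin 3 → ℝ) :
    (1 - c 0 - c 1 - c 2 ≥ 0 ∧ 1 - c 0 + c 1 + c 2 ≥ 0 ∧
       1 + c 0 - c 1 + c 2 ≥ 0 ∧ 1 + c 0 + c 1 - c 2 ≥ 0) ↔
      c ∈ convexHull ℝ
        ({![-1, -1, -1], ![-1, 1, 1], ![1, -1, 1], ![1, 1, -1]} : Set (Fin 3 → ℝ)) := by
  constructor
  · rintro ⟨h1, h2, h3, h4⟩
    set S : Set (Fin 3 → ℝ) := {![-1, -1, -1], ![-1, 1, 1], ![1, -1, 1], ![1, 1, -1]} with hS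
    have key := (convex_convexHull ℝ S).sum_mem (t := (Finset.univ : Finset (Fin 4)))
      (w := ![(1 - c 0 - c 1 - c 2)/4, (1 - c 0 + c 1 + c 2)/4,
              (1 + c 0 - c 1 + c 2)/4, (1 + c 0 + c 1 - c 2)/4])
      (z := ![![-1, -1, -1], ![-1, 1, 1], ![1, -1, 1], ![1, 1, -1]])
      (by intro i _; fin_cases i <;> simp <;> linarith)
      (by simp [Fin.sum_univ_four]; ring)
      (by intro i _; fin_cases i <;> exact subset_convexHull ℝ S (by simp [hS]))
    have hc : c = ∑ i : Fin 4,
        (![(1 - c 0 - c 1 - c 2)/4, (1 - c 0 + c 1 + c 2)/4,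
           (1 + c 0 - c 1 + c 2)/4, (1 + c 0 + c 1 - c 2)/4]) i •
        (![![-1, -1, -1], ![-1, 1, 1], ![1, -1, 1], ![1, 1, -1]]) i := by
      funext j
      fin_cases j <;> simp [Fin.sum_univ_four, Matrix.vecHead, Matrix.vecTail] <;> ring
    rw [hc]
    exact key
  · intro hc
    have hsub : ({![-1, -1, -1], ![-1, 1, 1], ![1, -1, 1], ![1, 1, -1]} : Set (Fin 3 → ℝ)) ⊆
        {x | 1 - x 0 - x 1 - x 2 ≥ 0 ∧ 1 - x 0 + x 1 + x 2 ≥ 0 ∧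
             1 + x 0 - x 1 + x 2 ≥ 0 ∧ 1 + x 0 + x 1 - x 2 ≥ 0} := by
      rintro x (rfl | rfl | rfl | rfl) <;> norm_num [Matrix.cons_val_two, Matrix.vecHead, Matrix.vecTail]
    have hconv : Convex ℝ {x : Fin 3 → ℝ | 1 - x 0 - x 1 - x 2 ≥ 0 ∧ 1 - x 0 + x 1 + x 2 ≥ 0 ∧
             1 + x 0 - x 1 + x 2 ≥ 0 ∧ 1 + x 0 + x 1 - x 2 ≥ 0} := by
      intro x hx y hy a b ha hb hab
      simp only [Set.mem_setOf_eq, Pi.add_apply, Pi.smul_apply, smul_eq_mul] at *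
      obtain ⟨hx1, hx2, hx3, hx4⟩ := hx
      obtain ⟨hy1, hy2, hy3, hy4⟩ := hy
      refine ⟨?_, ?_, ?_, ?_⟩ <;> nlinarith
    exact convexHull_min hsub hconv hc

/-- `ρ(c)` is positive semidefinite iff `c` lies in the tetrahedron with vertices
`(−1,−1,−1), (−1,1,1), (1,−1,1), (1,1,−1)`; equivalently, iff the four inequalities
`1−c₁−c₂−c₃ ≥ 0`, `1−c₁+c₂+c₃ ≥ 0`, `1+c₁−c₂+c₃ ≥ 0`, `1+c₁+c₂−c₃ ≥ 0` hold. -/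
theorem stmt6 (c : Fin 3 → ℝ) :
    ((ρ c).PosSemidef ↔
      c ∈ convexHull ℝ
        ({![-1, -1, -1], ![-1, 1, 1], ![1, -1, 1], ![1, 1, -1]} : Set (Fin 3 → ℝ))) ∧
    ((ρ c).PosSemidef ↔
      (1 - c 0 - c 1 - c 2 ≥ 0 ∧ 1 - c 0 + c 1 + c 2 ≥ 0 ∧
       1 + c 0 - c 1 + c 2 ≥ 0 ∧ 1 + c 0 + c 1 - c 2 ≥ 0)) :=
  ⟨(psd_iff_ineq c).trans (ineq_iff_hull c), psd_iff_ineq c⟩
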